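/- Let X and Y be normed linear spaces, f : X×Y → ℝ ∪ {+∞} with f(x̄,ȳ) = 0. Then the strict outer slope of f at (x̄,ȳ) is bounded above by the strict outer subdifferential slope: \overline{|∇f|}^>(x̄,ȳ) ≤ \overline{|∂f|}^>(x̄,ȳ). -/

import Mathlib

open Filter Metric Topology ENNReal

/-- The "positive part" of an extended real, as an element of `ℝ≥0∞`. -/
noncomputable def ePlus (a : EReal) : ℝ≥0∞ := if a = ⊤ then ⊤ else ENNReal.ofReal a.toReal

/-- The Fréchet subdifferential of `g` at `p` (empty when `g(p) = +∞`);
the defining liminf inequality is expressed in the equivalent ε-form. -/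
def frSubdiff {E : Type*} [NormedAddCommGroup E] [NormedSpace ℝ E]
    (g : E → EReal) (p : E) : Set (E →L[ℝ] ℝ) :=
  {l | g p ≠ ⊤ ∧ ∀ ε : ℝ, 0 < ε →
    ∀ᶠ q in 𝓝[≠] p, g p + ((l (q - p) - ε * ‖q - p‖ : ℝ) : EReal) ≤ g q}

variable {X Y : Type*} [NormedAddCommGroup X] [NormedSpace ℝ X]
  [NormedAddCommGroup Y] [NormedSpace ℝ Y]

/-- The ρ-slope of `f` at `(x,y)` (set to `+∞` when `f(x,y) = +∞`). -/
noncomputable def locSlopeRho (f : X × Y → EReal) (ρ : ℝ) (p : X × Y) : ℝ≥0∞ :=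
  if f p = ⊤ then ⊤ else
    Filter.limsup
      (fun q => ePlus (f p - f q) / ENNReal.ofReal (max ‖q.1 - p.1‖ (ρ * ‖q.2 - p.2‖)))
      (𝓝[≠] p)

/-- The subdifferential ρ-slope of `f` at `(x,y)`:
`|∂f|_ρ(x,y) := inf {‖x*‖ : (x*,y*) ∈ ∂f(x,y), ‖y*‖ < ρ}` (`inf ∅ = +∞`). -/
noncomputable def sdSlopeRho (f : X × Y → EReal) (ρ : ℝ) (p : X × Y) : ℝ≥0∞ :=
  ⨅ (l : X × Y →L[ℝ] ℝ)
    (_ : l ∈ frSubdiff f p ∧ ‖l.comp (ContinuousLinearMap.inr ℝ X Y)‖ < ρ),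
      (‖l.comp (ContinuousLinearMap.inl ℝ X Y)‖₊ : ℝ≥0∞)

/-- The strict outer slope
`\overline{|∇f|}^>(x̄,ȳ) := lim_{ρ↓0} inf {|∇f|_ρ(x,y) : ‖x−x̄‖ < ρ, 0 < f(x,y) < ρ}`
(the limit being a supremum by monotonicity; `inf ∅ = +∞`). -/
noncomputable def strictOuterSlope2 (f : X × Y → EReal) (x₀ : X) : ℝ≥0∞ :=
  ⨆ (ρ : ℝ) (_ : 0 < ρ),
    ⨅ (p : X × Y) (_ : ‖p.1 - x₀‖ < ρ ∧ 0 < f p ∧ f p < (ρ : EReal)), locSlopeRho f ρ p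

/-- The strict outer subdifferential slope
`\overline{|∂f|}^>(x̄,ȳ) := lim_{ρ↓0} inf {|∂f|_ρ(x,y) : ‖x−x̄‖ < ρ, 0 < f(x,y) < ρ}`. -/
noncomputable def strictOuterSdSlope2 (f : X × Y → EReal) (x₀ : X) : ℝ≥0∞ :=
  ⨆ (ρ : ℝ) (_ : 0 < ρ),
    ⨅ (p : X × Y) (_ : ‖p.1 - x₀‖ < ρ ∧ 0 < f p ∧ f p < (ρ : EReal)), sdSlopeRho f ρ p

open ContinuousLinearMap in
lemma locSlopeRho_le_of_frSubdiff (f : X × Y → EReal) (hbot : ∀ p, f p ≠ ⊥) {ρ : ℝ}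
    (hρ : 0 < ρ) (p : X × Y) (l : X × Y →L[ℝ] ℝ) (hl : l ∈ frSubdiff f p) :
    locSlopeRho f ρ p ≤
      ENNReal.ofReal (‖l.comp (inl ℝ X Y)‖ + ‖l.comp (inr ℝ X Y)‖ / ρ) := by
  obtain ⟨hft, hsub⟩ := hl
  set K : ℝ := ‖l.comp (inl ℝ X Y)‖ + ‖l.comp (inr ℝ X Y)‖ / ρ with hK
  have hK0 : 0 ≤ K := by positivity
  rw [locSlopeRho, if_neg hft]
  set a : ℝ := (f p).toReal with ha
  have hfp : f p = (a : EReal) := (EReal.coe_toReal hft (hbot p)).symm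
  apply ENNReal.le_of_forall_pos_le_add
  intro ε' hε' _
  set M : ℝ := max 1 (1/ρ) with hM
  have hM0 : 0 < M := lt_of_lt_of_le one_pos (le_max_left _ _)
  have hM1 : 1 ≤ M := le_max_left _ _
  set ε : ℝ := (ε' : ℝ) / M with hε
  have hεpos : 0 < ε := div_pos hε' hM0
  have hεM : ε * M = (ε' : ℝ) := div_mul_cancel₀ _ hM0.ne'
  have hev := hsub ε hεpos
  have hev2 : ∀ᶠ q in 𝓝[≠] p,
      ePlus (f p - f q) / ENNReal.ofReal (max ‖q.1 - p.1‖ (ρ * ‖q.2 - p.2‖))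
        ≤ ENNReal.ofReal (K + ε * M) := by
    filter_upwards [hev, self_mem_nhdsWithin] with q hq hqp
    set u : X := q.1 - p.1 with hu
    set v : Y := q.2 - p.2 with hv
    set D : ℝ := max ‖u‖ (ρ * ‖v‖) with hD
    have hqp' : q - p ≠ 0 := sub_ne_zero.mpr hqp
    have hD0 : 0 < D := by
      rcases eq_or_ne u 0 with h0 | h0
      · have hv0 : v ≠ 0 := by
          intro h
          apply hqp'
          have hqpuv : q - p = (u, v) := rfl
          rw [hqpuv, h0, h]; rfl
        exact lt_max_of_lt_right (mul_pos hρ (norm_pos_iff.mpr hv0))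
      · exact lt_max_of_lt_left (norm_pos_iff.mpr h0)
    have huD : ‖u‖ ≤ D := le_max_left _ _
    have hvD : ‖v‖ ≤ D / ρ := (le_div_iff₀' hρ).mpr (le_max_right _ _)
    have hqpD : ‖q - p‖ ≤ M * D := by
      have hnd : ‖q - p‖ = max ‖u‖ ‖v‖ := rfl
      rw [hnd]
      apply max_le
      · calc ‖u‖ ≤ D := huD
          _ = 1 * D := (one_mul D).symm
          _ ≤ M * D := by nlinarith
      · calc ‖v‖ ≤ D / ρ := hvD
          _ = (1/ρ) * D := by ring
          _ ≤ M * D := mul_le_mul_of_nonneg_right (le_max_right _ _) hD0.le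
    have hlq : -(l (q - p)) + ε * ‖q - p‖ ≤ (K + ε * M) * D := by
      have hsplit : l (q - p) = l.comp (inl ℝ X Y) u + l.comp (inr ℝ X Y) v := by
        have h1 : (q - p) = (u, 0) + ((0 : X), v) := by
          rw [Prod.mk_add_mk, add_zero, zero_add]
          rfl
        rw [h1, map_add]; rfl
      have h2 : -(l (q - p)) ≤ ‖l.comp (inl ℝ X Y)‖ * ‖u‖ + ‖l.comp (inr ℝ X Y)‖ * ‖v‖ := by
        have hb1 := (l.comp (inl ℝ X Y)).le_opNorm u
        have hb2 := (l.comp (inr ℝ X Y)).le_opNorm v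
        have habs1 : -(l.comp (inl ℝ X Y) u) ≤ ‖l.comp (inl ℝ X Y) u‖ := neg_le_abs _
        have habs2 : -(l.comp (inr ℝ X Y) v) ≤ ‖l.comp (inr ℝ X Y) v‖ := neg_le_abs _
        rw [hsplit]
        linarith
      have h3 : ‖l.comp (inl ℝ X Y)‖ * ‖u‖ ≤ ‖l.comp (inl ℝ X Y)‖ * D :=
        mul_le_mul_of_nonneg_left huD (norm_nonneg _)
      have h4 : ‖l.comp (inr ℝ X Y)‖ * ‖v‖ ≤ ‖l.comp (inr ℝ X Y)‖ * (D / ρ) :=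
        mul_le_mul_of_nonneg_left hvD (norm_nonneg _)
      have h5 : ε * ‖q - p‖ ≤ ε * (M * D) :=
        mul_le_mul_of_nonneg_left hqpD hεpos.le
      have hKD : (K + ε * M) * D
          = ‖l.comp (inl ℝ X Y)‖ * D + ‖l.comp (inr ℝ X Y)‖ * (D / ρ) + ε * (M * D) := by
        rw [hK]; field_simp
      clear_value K M ε a u v D
      linarith
    have hnum : ePlus (f p - f q) ≤ ENNReal.ofReal ((K + ε * M) * D) := by
      rcases eq_or_ne (f q) ⊤ with h | h
      · rw [hfp, h]
        have hbotc : (a : EReal) - ⊤ = ⊥ := rfl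
        rw [hbotc]
        simp [ePlus]
      · set b : ℝ := (f q).toReal with hb
        have hfq : f q = (b : EReal) := (EReal.coe_toReal h (hbot q)).symm
        rw [hfp, hfq] at hq ⊢
        rw [← EReal.coe_add, EReal.coe_le_coe_iff] at hq
        rw [← EReal.coe_sub]
        have heq : ePlus ((a - b : ℝ) : EReal) = ENNReal.ofReal (a - b) := by
          simp only [ePlus, EReal.coe_ne_top, if_false, EReal.toReal_coe]
        rw [heq]
        apply ENNReal.ofReal_le_ofReal
        linarith
    calc ePlus (f p - f q) / ENNReal.ofReal D
        ≤ ENNReal.ofReal ((K + ε * M) * D) / ENNReal.ofReal D :=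
          ENNReal.div_le_div_right hnum _
      _ ≤ ENNReal.ofReal (K + ε * M) := by
          apply ENNReal.div_le_of_le_mul
          rw [← ENNReal.ofReal_mul (by positivity)]
  calc Filter.limsup
        (fun q => ePlus (f p - f q) / ENNReal.ofReal (max ‖q.1 - p.1‖ (ρ * ‖q.2 - p.2‖)))
        (𝓝[≠] p)
      ≤ ENNReal.ofReal (K + ε * M) := Filter.limsup_le_of_le (by isBoundedDefault) hev2
    _ ≤ ENNReal.ofReal K + ENNReal.ofReal (ε * M) := ENNReal.ofReal_add_le
    _ = ENNReal.ofReal K + ε' := by rw [hεM, ENNReal.ofReal_coe_nnreal]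

/-- `\overline{|∇f|}^>(x̄,ȳ) ≤ \overline{|∂f|}^>(x̄,ȳ)`. -/
theorem strictOuterSlope2_le_strictOuterSdSlope2 (f : X × Y → EReal) (x₀ : X) (y₀ : Y)
    (hbot : ∀ p, f p ≠ ⊥) (hf₀ : f (x₀, y₀) = 0) :
    strictOuterSlope2 f x₀ ≤ strictOuterSdSlope2 f x₀ := by
  rw [strictOuterSlope2]
  refine iSup_le fun ρ => iSup_le fun hρ => ?_
  set c := strictOuterSdSlope2 f x₀ with hc
  apply ENNReal.le_of_forall_pos_le_add
  intro δ hδ hctop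
  set ρ' : ℝ := min ρ (ρ * ((δ : ℝ) / 2)) with hρ'
  have hρ'pos : 0 < ρ' := lt_min hρ (by positivity)
  have hρ'ρ : ρ' ≤ ρ := min_le_left _ _
  have h1 : (⨅ (p : X × Y) (_ : ‖p.1 - x₀‖ < ρ' ∧ 0 < f p ∧ f p < (ρ' : EReal)),
      sdSlopeRho f ρ' p) ≤ c := le_iSup_of_le ρ' (le_iSup_of_le hρ'pos le_rfl)
  have hδ2 : (0 : ℝ≥0∞) < (δ : ℝ≥0∞) / 2 :=
    ENNReal.div_pos (by exact_mod_cast hδ.ne') (by norm_num)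
  have h2 : (⨅ (p : X × Y) (_ : ‖p.1 - x₀‖ < ρ' ∧ 0 < f p ∧ f p < (ρ' : EReal)),
      sdSlopeRho f ρ' p) < c + (δ : ℝ≥0∞) / 2 :=
    lt_of_le_of_lt h1 (ENNReal.lt_add_right hctop.ne hδ2.ne')
  simp only [iInf_lt_iff] at h2
  obtain ⟨p, hp, h2⟩ := h2
  rw [sdSlopeRho] at h2
  simp only [iInf_lt_iff] at h2
  obtain ⟨l, ⟨hlsub, hlr⟩, hlnorm⟩ := h2
  have hpρ : ‖p.1 - x₀‖ < ρ ∧ 0 < f p ∧ f p < (ρ : EReal) :=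
    ⟨lt_of_lt_of_le hp.1 hρ'ρ, hp.2.1, lt_of_lt_of_le hp.2.2 (by exact_mod_cast hρ'ρ)⟩
  have key := locSlopeRho_le_of_frSubdiff f hbot hρ p l hlsub
  calc (⨅ (p : X × Y) (_ : ‖p.1 - x₀‖ < ρ ∧ 0 < f p ∧ f p < (ρ : EReal)), locSlopeRho f ρ p)
      ≤ locSlopeRho f ρ p := iInf₂_le p hpρ
    _ ≤ ENNReal.ofReal (‖l.comp (ContinuousLinearMap.inl ℝ X Y)‖
          + ‖l.comp (ContinuousLinearMap.inr ℝ X Y)‖ / ρ) := key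
    _ ≤ ENNReal.ofReal ‖l.comp (ContinuousLinearMap.inl ℝ X Y)‖
          + ENNReal.ofReal (‖l.comp (ContinuousLinearMap.inr ℝ X Y)‖ / ρ) :=
        ENNReal.ofReal_add_le
    _ ≤ (c + (δ : ℝ≥0∞) / 2) + (δ : ℝ≥0∞) / 2 := by
        apply add_le_add
        · rw [ofReal_norm]
          exact hlnorm.le
        · have h3 : ‖l.comp (ContinuousLinearMap.inr ℝ X Y)‖ / ρ ≤ (δ : ℝ) / 2 := by
            have h4 : ‖l.comp (ContinuousLinearMap.inr ℝ X Y)‖ ≤ ρ * ((δ : ℝ) / 2) :=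
              le_trans hlr.le (min_le_right _ _)
            rw [div_le_iff₀ hρ]
            linarith
          calc ENNReal.ofReal (‖l.comp (ContinuousLinearMap.inr ℝ X Y)‖ / ρ)
              ≤ ENNReal.ofReal ((δ : ℝ) / 2) := ENNReal.ofReal_le_ofReal h3
            _ = (δ : ℝ≥0∞) / 2 := by
                rw [ENNReal.ofReal_div_of_pos (by norm_num), ENNReal.ofReal_coe_nnreal]
                norm_num
    _ = c + δ := by rw [add_assoc, ENNReal.add_halves]
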